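/- Let Γ_{1:n} = Π_{i=1}^n (I − αX_iX_iᵀ) and Γ'_{1:n} the same product with X_i replaced by an independent copy X_i' at a single index i, all X's i.i.d. with ‖X‖ ≤ c a.s. and E[XXᵀ] = Φ positive definite (λ_min = a), α ∈ (0, 1/c²]. Then Γ_{1:n} − Γ'_{1:n} = α Γ_{i+1:n}(X_i'X_i'ᵀ − X_iX_iᵀ)Γ_{1:i−1}, and consequently for any v ∈ ℝ^d, E[‖(Γ_{1:n} − Γ'_{1:n})v‖²]^{1/2} ≤ 2αc² (1 − αa/2)^{n−1}‖v‖. -/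

import Mathlib

open MeasureTheory Matrix ProbabilityTheory

noncomputable def vnorm {d : ℕ} (v : Fin d → ℝ) : ℝ := Real.sqrt (∑ i, v i ^ 2)

noncomputable def prodGamma {d : ℕ} (α : ℝ) (Xs : ℕ → Fin d → ℝ) (m k : ℕ) :
    Matrix (Fin d) (Fin d) ℝ :=
  ((List.range (k + 1 - m)).map (fun j =>
      (1 : Matrix (Fin d) (Fin d) ℝ) - α • vecMulVec (Xs (k - j)) (Xs (k - j)))).prod

section aux
variable {d : ℕ}

lemma vnorm_nonneg (v : Fin d → ℝ) : 0 ≤ vnorm v := Real.sqrt_nonneg _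

lemma vnorm_sq (v : Fin d → ℝ) : vnorm v ^ 2 = ∑ i, v i ^ 2 :=
  Real.sq_sqrt (Finset.sum_nonneg fun _ _ => sq_nonneg _)

lemma le_of_sq_le' {x y : ℝ} (hx : 0 ≤ x) (hy : 0 ≤ y) (h : x ^ 2 ≤ y ^ 2) : x ≤ y := by
  nlinarith

lemma abs_le_vnorm (v : Fin d → ℝ) (j : Fin d) : |v j| ≤ vnorm v := by
  rw [vnorm, ← Real.sqrt_sq_eq_abs]
  exact Real.sqrt_le_sqrt (Finset.single_le_sum (f := fun i => v i ^ 2)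
    (fun i _ => sq_nonneg _) (Finset.mem_univ j))

lemma abs_dot_le (x w : Fin d → ℝ) : |x ⬝ᵥ w| ≤ vnorm x * vnorm w := by
  have h := Finset.sum_mul_sq_le_sq_mul_sq Finset.univ x w
  have h2 : (x ⬝ᵥ w) ^ 2 ≤ (vnorm x * vnorm w) ^ 2 := by
    rw [mul_pow, vnorm_sq, vnorm_sq]; exact h
  have h3 := mul_nonneg (vnorm_nonneg x) (vnorm_nonneg w)
  nlinarith [abs_nonneg (x ⬝ᵥ w), sq_abs (x ⬝ᵥ w)]

lemma vnorm_smul (r : ℝ) (v : Fin d → ℝ) : vnorm (r • v) = |r| * vnorm v := by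
  have : ∑ i, (r • v) i ^ 2 = r ^ 2 * ∑ i, v i ^ 2 := by
    rw [Finset.mul_sum]; exact Finset.sum_congr rfl fun i _ => by simp [mul_pow]
  rw [vnorm, this, Real.sqrt_mul (sq_nonneg r), Real.sqrt_sq_eq_abs, vnorm]

lemma vnorm_add_le (u w : Fin d → ℝ) : vnorm (u + w) ≤ vnorm u + vnorm w := by
  refine le_of_sq_le' (vnorm_nonneg _) (add_nonneg (vnorm_nonneg _) (vnorm_nonneg _)) ?_
  have hexp : ∑ i, (u i + w i) ^ 2
      = (∑ i, u i ^ 2) + 2 * (∑ i, u i * w i) + ∑ i, w i ^ 2 := by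
    rw [Finset.mul_sum, ← Finset.sum_add_distrib, ← Finset.sum_add_distrib]
    exact Finset.sum_congr rfl fun i _ => by ring
  have hdot : (∑ i, u i * w i) ≤ vnorm u * vnorm w := by
    have := abs_dot_le u w
    have h2 : u ⬝ᵥ w = ∑ i, u i * w i := rfl
    rw [h2] at this
    exact le_trans (le_abs_self _) this
  have h1 : vnorm (u + w) ^ 2 = ∑ i, (u i + w i) ^ 2 := by
    rw [vnorm_sq]; exact Finset.sum_congr rfl fun i _ => by simp
  rw [h1, hexp]
  have := vnorm_sq u
  have := vnorm_sq w
  nlinarith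

lemma vecMulVec_mulVec' (x y w : Fin d → ℝ) :
    (vecMulVec x y).mulVec w = (y ⬝ᵥ w) • x := by
  funext i
  simp only [Matrix.mulVec, Matrix.vecMulVec_apply, dotProduct, Pi.smul_apply, smul_eq_mul]
  rw [Finset.sum_mul]
  exact Finset.sum_congr rfl fun j _ => by ring

end aux

section aux2
variable {d : ℕ}

lemma Mmat_mulVec (α : ℝ) (x w : Fin d → ℝ) :
    ((1 : Matrix (Fin d) (Fin d) ℝ) - α • vecMulVec x x).mulVec w
      = w - (α * (x ⬝ᵥ w)) • x := by
  rw [Matrix.sub_mulVec, Matrix.one_mulVec, Matrix.smul_mulVec, vecMulVec_mulVec']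
  rw [smul_smul]

lemma key_sq {α : ℝ} (hα : 0 ≤ α) (x w : Fin d → ℝ) (hx : α * vnorm x ^ 2 ≤ 1) :
    vnorm (((1 : Matrix (Fin d) (Fin d) ℝ) - α • vecMulVec x x).mulVec w) ^ 2
      ≤ vnorm w ^ 2 - α * (x ⬝ᵥ w) ^ 2 := by
  rw [Mmat_mulVec, vnorm_sq]
  set t := α * (x ⬝ᵥ w) with ht
  have hexp : ∑ i, (w - t • x) i ^ 2
      = (∑ i, w i ^ 2) - 2 * t * (∑ i, x i * w i) + t ^ 2 * (∑ i, x i ^ 2) := by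
    rw [Finset.mul_sum, Finset.mul_sum, ← Finset.sum_sub_distrib, ← Finset.sum_add_distrib]
    exact Finset.sum_congr rfl fun i _ => by simp; ring
  have hdot : x ⬝ᵥ w = ∑ i, x i * w i := rfl
  rw [hexp, ← vnorm_sq, ← vnorm_sq, ← hdot]
  have h1 : 0 ≤ α * (x ⬝ᵥ w) ^ 2 := mul_nonneg hα (sq_nonneg _)
  have h2 : t ^ 2 * vnorm x ^ 2 = (α * (x ⬝ᵥ w) ^ 2) * (α * vnorm x ^ 2) := by
    rw [ht]; ring
  have h3 : t ^ 2 * vnorm x ^ 2 ≤ α * (x ⬝ᵥ w) ^ 2 := by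
    rw [h2]
    calc (α * (x ⬝ᵥ w) ^ 2) * (α * vnorm x ^ 2) ≤ (α * (x ⬝ᵥ w) ^ 2) * 1 :=
          mul_le_mul_of_nonneg_left hx h1
      _ = α * (x ⬝ᵥ w) ^ 2 := mul_one _
  have h4 : t * (x ⬝ᵥ w) = α * (x ⬝ᵥ w) ^ 2 := by rw [ht]; ring
  linarith

lemma vnorm_M_le {α : ℝ} (hα : 0 ≤ α) (x w : Fin d → ℝ) (hx : α * vnorm x ^ 2 ≤ 1) :
    vnorm (((1 : Matrix (Fin d) (Fin d) ℝ) - α • vecMulVec x x).mulVec w) ≤ vnorm w := by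
  refine le_of_sq_le' (vnorm_nonneg _) (vnorm_nonneg _) ?_
  have := key_sq hα x w hx
  nlinarith [mul_nonneg hα (sq_nonneg (x ⬝ᵥ w))]

lemma vnorm_vvD_le (x y w : Fin d → ℝ) :
    vnorm ((vecMulVec x x - vecMulVec y y).mulVec w)
      ≤ (vnorm x ^ 2 + vnorm y ^ 2) * vnorm w := by
  rw [Matrix.sub_mulVec, vecMulVec_mulVec', vecMulVec_mulVec', sub_eq_add_neg, ← neg_smul]
  refine le_trans (vnorm_add_le _ _) ?_
  rw [vnorm_smul, vnorm_smul, abs_neg]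
  have h1 := abs_dot_le x w
  have h2 := abs_dot_le y w
  have := vnorm_nonneg x
  have := vnorm_nonneg y
  have := vnorm_nonneg w
  have := abs_nonneg (x ⬝ᵥ w)
  have := abs_nonneg (y ⬝ᵥ w)
  nlinarith

lemma prodGamma_of_lt (α : ℝ) (Xs : ℕ → Fin d → ℝ) {m k : ℕ} (h : k < m) :
    prodGamma α Xs m k = 1 := by
  unfold prodGamma
  rw [Nat.sub_eq_zero_of_le h, List.range_zero, List.map_nil, List.prod_nil]

lemma prodGamma_succ (α : ℝ) (Xs : ℕ → Fin d → ℝ) {m k : ℕ} (h : m ≤ k + 1) :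
    prodGamma α Xs m (k + 1)
      = ((1 : Matrix (Fin d) (Fin d) ℝ)
          - α • vecMulVec (Xs (k + 1)) (Xs (k + 1))) * prodGamma α Xs m k := by
  unfold prodGamma
  have h1 : k + 1 + 1 - m = (k + 1 - m) + 1 := by omega
  rw [h1, List.range_succ_eq_map, List.map_cons, List.prod_cons, List.map_map]
  simp [Function.comp_def, Nat.succ_sub_succ]

lemma prodGamma_congr (α : ℝ) {Xs Ys : ℕ → Fin d → ℝ} {m k : ℕ}
    (h : ∀ j, m ≤ j → j ≤ k → Xs j = Ys j) :
    prodGamma α Xs m k = prodGamma α Ys m k := by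
  unfold prodGamma
  congr 1
  refine List.map_congr_left fun j hj => ?_
  rw [List.mem_range] at hj
  rw [h (k - j) (by omega) (by omega)]

lemma prodGamma_split (α : ℝ) (Xs : ℕ → Fin d → ℝ) {m j : ℕ} (hm : m ≤ j + 1) :
    ∀ k, j ≤ k → prodGamma α Xs m k = prodGamma α Xs (j + 1) k * prodGamma α Xs m j := by
  intro k hk
  induction k, hk using Nat.le_induction with
  | base => rw [prodGamma_of_lt α Xs (Nat.lt_succ_self j), one_mul]
  | succ k hk ih =>
      rw [prodGamma_succ α Xs (by omega), ih, prodGamma_succ α Xs (by omega), Matrix.mul_assoc]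

lemma vnorm_prodGamma_le {α : ℝ} (hα : 0 ≤ α) (Xs : ℕ → Fin d → ℝ) (m : ℕ) :
    ∀ k, (∀ j, m ≤ j → j ≤ k → α * vnorm (Xs j) ^ 2 ≤ 1) →
      ∀ w, vnorm ((prodGamma α Xs m k).mulVec w) ≤ vnorm w := by
  intro k
  induction k with
  | zero =>
      intro h w
      rcases Nat.eq_zero_or_pos m with hm | hm
      · subst hm
        have : prodGamma α Xs 0 0
            = (1 : Matrix (Fin d) (Fin d) ℝ) - α • vecMulVec (Xs 0) (Xs 0) := by
          unfold prodGamma; simp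
        rw [this]
        exact vnorm_M_le hα _ _ (h 0 le_rfl le_rfl)
      · rw [prodGamma_of_lt α Xs hm, Matrix.one_mulVec]
  | succ k ih =>
      intro h w
      by_cases hm : m ≤ k + 1
      · rw [prodGamma_succ α Xs hm, ← Matrix.mulVec_mulVec]
        exact le_trans (vnorm_M_le hα _ _ (h (k + 1) hm le_rfl))
          (ih (fun j h1 h2 => h j h1 (by omega)) w)
      · rw [prodGamma_of_lt α Xs (by omega), Matrix.one_mulVec]

end aux2

section meas
variable {d : ℕ}

lemma continuous_vnorm : Continuous (vnorm (d := d)) := by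
  unfold vnorm
  exact Real.continuous_sqrt.comp
    (continuous_finset_sum _ fun i _ => (continuous_apply i).pow 2)

lemma measurable_vnorm : Measurable (vnorm (d := d)) := continuous_vnorm.measurable

lemma measurable_listprod (α : ℝ) (k : ℕ) (l : List ℕ) (i j : Fin d) :
    Measurable (fun x : ℕ → Fin d → ℝ =>
      ((l.map fun t => (1 : Matrix (Fin d) (Fin d) ℝ)
          - α • vecMulVec (x (k - t)) (x (k - t))).prod) i j) := by
  induction l generalizing i j with
  | nil => simp only [List.map_nil, List.prod_nil]; exact measurable_const
  | cons a t ih =>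
      simp only [List.map_cons, List.prod_cons, Matrix.mul_apply]
      refine Finset.measurable_sum _ fun kk _ => Measurable.mul ?_ (ih kk j)
      simp only [Matrix.sub_apply, Matrix.smul_apply, Matrix.one_apply,
        Matrix.vecMulVec_apply, smul_eq_mul]
      fun_prop

lemma measurable_prodGamma_entry (α : ℝ) (m k : ℕ) (i j : Fin d) :
    Measurable fun x : ℕ → Fin d → ℝ => prodGamma α x m k i j := by
  unfold prodGamma
  exact measurable_listprod α k _ i j

lemma measurable_mulVec_pi {β : Type*} [MeasurableSpace β]
    {A : β → Matrix (Fin d) (Fin d) ℝ} {w : β → Fin d → ℝ}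
    (hA : ∀ i j, Measurable fun x => A x i j) (hw : ∀ j, Measurable fun x => w x j) :
    Measurable fun x => (A x).mulVec (w x) := by
  refine measurable_pi_lambda _ fun i => ?_
  simp only [Matrix.mulVec, dotProduct]
  exact Finset.measurable_sum _ fun j _ => (hA i j).mul (hw j)

lemma integrable_of_bound {Ω : Type*} [MeasurableSpace Ω] (μ : Measure Ω)
    [IsProbabilityMeasure μ] {f : Ω → ℝ} (hf : AEStronglyMeasurable f μ) (B : ℝ)
    (h : ∀ᵐ ω ∂μ, |f ω| ≤ B) : Integrable f μ := by
  refine (integrable_const B).mono' hf ?_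
  simpa [Real.norm_eq_abs] using h

end meas

lemma step_bound {d : ℕ} (c a α : ℝ) (hα : 0 < α) (hαc : α * c ^ 2 ≤ 1) (hc : 0 ≤ c)
    (Φ : Matrix (Fin d) (Fin d) ℝ)
    (hmin : ∀ u : Fin d → ℝ, a * vnorm u ^ 2 ≤ u ⬝ᵥ Φ.mulVec u)
    {Ω : Type*} [MeasurableSpace Ω] (μ : Measure Ω) [IsProbabilityMeasure μ]
    (Y W : Ω → Fin d → ℝ) (hYm : Measurable Y) (hWm : Measurable W)
    (hYb : ∀ᵐ ω ∂μ, vnorm (Y ω) ≤ c) (B : ℝ) (hB : 0 ≤ B)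
    (hWb : ∀ᵐ ω ∂μ, vnorm (W ω) ≤ B)
    (hYΦ : ∀ i j, (∫ ω, Y ω i * Y ω j ∂μ) = Φ i j)
    (hind : IndepFun Y W μ) :
    ∫ ω, vnorm (((1 : Matrix (Fin d) (Fin d) ℝ)
        - α • vecMulVec (Y ω) (Y ω)).mulVec (W ω)) ^ 2 ∂μ
      ≤ (1 - α * a) * ∫ ω, vnorm (W ω) ^ 2 ∂μ := by
  have hYc : ∀ j, Measurable fun ω => Y ω j := fun j => (measurable_pi_apply j).comp hYm
  have hWc : ∀ j, Measurable fun ω => W ω j := fun j => (measurable_pi_apply j).comp hWm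
  set F : Ω → ℝ := fun ω => vnorm (W ω) ^ 2 with hF
  set g : Ω → ℝ := fun ω => (Y ω ⬝ᵥ W ω) ^ 2 with hg
  have hFm : Measurable F := (measurable_vnorm.comp hWm).pow_const 2
  have hFi : Integrable F μ := by
    refine integrable_of_bound μ hFm.aestronglyMeasurable (B ^ 2) ?_
    filter_upwards [hWb] with ω h
    rw [abs_of_nonneg (sq_nonneg _)]
    exact pow_le_pow_left₀ (vnorm_nonneg _) h 2
  have hdotm : Measurable fun ω => Y ω ⬝ᵥ W ω := by
    simp only [dotProduct]
    exact Finset.measurable_sum _ fun i _ => (hYc i).mul (hWc i)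
  have hgm : Measurable g := hdotm.pow_const 2
  have hgi : Integrable g μ := by
    refine integrable_of_bound μ hgm.aestronglyMeasurable ((c * B) ^ 2) ?_
    filter_upwards [hWb, hYb] with ω h1 h2
    show |(Y ω ⬝ᵥ W ω) ^ 2| ≤ (c * B) ^ 2
    rw [abs_of_nonneg (sq_nonneg _)]
    have h5 : |Y ω ⬝ᵥ W ω| ≤ c * B :=
      le_trans (abs_dot_le _ _) (mul_le_mul h2 h1 (vnorm_nonneg _) hc)
    calc (Y ω ⬝ᵥ W ω) ^ 2 = |Y ω ⬝ᵥ W ω| ^ 2 := (sq_abs _).symm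
      _ ≤ (c * B) ^ 2 := pow_le_pow_left₀ (abs_nonneg _) h5 2
  -- step (iv)
  have h1 : (∫ ω, vnorm (((1 : Matrix (Fin d) (Fin d) ℝ)
        - α • vecMulVec (Y ω) (Y ω)).mulVec (W ω)) ^ 2 ∂μ)
      ≤ ∫ ω, (F ω - α * g ω) ∂μ := by
    refine integral_mono_of_nonneg (Filter.Eventually.of_forall fun ω => sq_nonneg _)
      (hFi.sub (hgi.const_mul α)) ?_
    filter_upwards [hYb] with ω h
    have hx : α * vnorm (Y ω) ^ 2 ≤ 1 := by
      have h2 : vnorm (Y ω) ^ 2 ≤ c ^ 2 := pow_le_pow_left₀ (vnorm_nonneg _) h 2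
      nlinarith
    exact key_sq hα.le _ _ hx
  rw [integral_sub hFi (hgi.const_mul α), integral_const_mul] at h1
  -- step (v)
  have hWWi : ∀ j k : Fin d, Integrable (fun ω => W ω j * W ω k) μ := by
    intro j k
    refine integrable_of_bound μ ((hWc j).mul (hWc k)).aestronglyMeasurable (B * B) ?_
    filter_upwards [hWb] with ω h
    rw [abs_mul]
    exact mul_le_mul (le_trans (abs_le_vnorm _ j) h) (le_trans (abs_le_vnorm _ k) h)
      (abs_nonneg _) hB
  have hkey : a * (∫ ω, F ω ∂μ) ≤ ∫ ω, g ω ∂μ := by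
    have hprod : ∀ j k : Fin d,
        (∫ ω, (Y ω j * Y ω k) * (W ω j * W ω k) ∂μ)
          = Φ j k * ∫ ω, W ω j * W ω k ∂μ := by
      intro j k
      have hYYi : Integrable (fun ω => Y ω j * Y ω k) μ := by
        refine integrable_of_bound μ ((hYc j).mul (hYc k)).aestronglyMeasurable (c * c) ?_
        filter_upwards [hYb] with ω h
        rw [abs_mul]
        exact mul_le_mul (le_trans (abs_le_vnorm _ j) h) (le_trans (abs_le_vnorm _ k) h)
          (abs_nonneg _) hc
      have hi : IndepFun (fun ω => Y ω j * Y ω k) (fun ω => W ω j * W ω k) μ := by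
        have hm : Measurable fun v : Fin d → ℝ => v j * v k :=
          (measurable_pi_apply j).mul (measurable_pi_apply k)
        exact hind.comp hm hm
      rw [← hYΦ j k]
      exact hi.integral_fun_mul_eq_mul_integral hYYi.aestronglyMeasurable (hWWi j k).aestronglyMeasurable
    have hYWi : ∀ j k : Fin d,
        Integrable (fun ω => (Y ω j * Y ω k) * (W ω j * W ω k)) μ := by
      intro j k
      refine integrable_of_bound μ
        ((((hYc j).mul (hYc k)).mul ((hWc j).mul (hWc k))).aestronglyMeasurable)
        ((c * c) * (B * B)) ?_
      filter_upwards [hWb, hYb] with ω h1 h2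
      rw [abs_mul, abs_mul, abs_mul]
      have hyj := le_trans (abs_le_vnorm (Y ω) j) h2
      have hyk := le_trans (abs_le_vnorm (Y ω) k) h2
      have hwj := le_trans (abs_le_vnorm (W ω) j) h1
      have hwk := le_trans (abs_le_vnorm (W ω) k) h1
      have h3 : |Y ω j| * |Y ω k| ≤ c * c :=
        mul_le_mul hyj hyk (abs_nonneg _) hc
      have h4 : |W ω j| * |W ω k| ≤ B * B :=
        mul_le_mul hwj hwk (abs_nonneg _) hB
      exact mul_le_mul h3 h4 (mul_nonneg (abs_nonneg _) (abs_nonneg _))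
        (mul_nonneg hc hc)
    have hgexp : (∫ ω, g ω ∂μ) = ∑ j, ∑ k, Φ j k * ∫ ω, W ω j * W ω k ∂μ := by
      have hgeq : g = fun ω => ∑ j, ∑ k, (Y ω j * Y ω k) * (W ω j * W ω k) := by
        funext ω
        rw [hg]
        simp only [dotProduct, pow_two, Finset.sum_mul_sum]
        exact Finset.sum_congr rfl fun j _ => Finset.sum_congr rfl fun k _ => by ring
      rw [hgeq, integral_finset_sum _ fun j _ =>
        integrable_finset_sum _ fun k _ => hYWi j k]
      refine Finset.sum_congr rfl fun j _ => ?_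
      rw [integral_finset_sum _ fun k _ => hYWi j k]
      exact Finset.sum_congr rfl fun k _ => hprod j k
    have hQeq : (fun ω => W ω ⬝ᵥ Φ.mulVec (W ω))
        = fun ω => ∑ j, ∑ k, Φ j k * (W ω j * W ω k) := by
      funext ω
      simp only [dotProduct, Matrix.mulVec, Finset.mul_sum]
      exact Finset.sum_congr rfl fun j _ => Finset.sum_congr rfl fun k _ => by ring
    have hQi : Integrable (fun ω => W ω ⬝ᵥ Φ.mulVec (W ω)) μ := by
      rw [hQeq]
      exact integrable_finset_sum _ fun j _ =>
        integrable_finset_sum _ fun k _ => (hWWi j k).const_mul _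
    have hQval : (∫ ω, W ω ⬝ᵥ Φ.mulVec (W ω) ∂μ)
        = ∑ j, ∑ k, Φ j k * ∫ ω, W ω j * W ω k ∂μ := by
      rw [hQeq, integral_finset_sum _ fun j _ =>
        integrable_finset_sum _ fun k _ => (hWWi j k).const_mul (Φ j k)]
      refine Finset.sum_congr rfl fun j _ => ?_
      rw [integral_finset_sum _ fun k _ => (hWWi j k).const_mul (Φ j k)]
      exact Finset.sum_congr rfl fun k _ => integral_const_mul _ _
    have hmono : (∫ ω, a * F ω ∂μ) ≤ ∫ ω, W ω ⬝ᵥ Φ.mulVec (W ω) ∂μ := by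
      refine integral_mono_ae (hFi.const_mul a) hQi ?_
      exact Filter.Eventually.of_forall fun ω => hmin (W ω)
    rw [integral_const_mul] at hmono
    rw [hgexp, ← hQval]
    exact hmono
  have hmul : α * (a * ∫ ω, F ω ∂μ) ≤ α * ∫ ω, g ω ∂μ :=
    mul_le_mul_of_nonneg_left hkey hα.le
  have : (1 - α * a) * ∫ ω, F ω ∂μ
      = (∫ ω, F ω ∂μ) - α * (a * ∫ ω, F ω ∂μ) := by ring
  rw [this]
  linarith

lemma chain_bound {d : ℕ} (c a α : ℝ) (hα : 0 < α) (hαc : α * c ^ 2 ≤ 1) (hc : 0 ≤ c)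
    (haa : α * a ≤ 1)
    (Φ : Matrix (Fin d) (Fin d) ℝ)
    (hmin : ∀ u : Fin d → ℝ, a * vnorm u ^ 2 ≤ u ⬝ᵥ Φ.mulVec u)
    {Ω : Type*} [MeasurableSpace Ω] (μ : Measure Ω) [IsProbabilityMeasure μ]
    (X : ℕ → Ω → Fin d → ℝ) (hXmeas : ∀ k, Measurable (X k))
    (hindep : iIndepFun X μ)
    (hident : ∀ k, IdentDistrib (X k) (X 1) μ μ)
    (hXbdd : ∀ k, ∀ᵐ ω ∂μ, vnorm (X k ω) ≤ c)
    (hXΦ : ∀ i j, (∫ ω, X 1 ω i * X 1 ω j ∂μ) = Φ i j) :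
    ∀ (nn k : ℕ), 1 ≤ k → ∀ (s : Finset ℕ) (G : (ℕ → Fin d → ℝ) → Fin d → ℝ) (B : ℝ),
      0 ≤ B → Measurable G →
      (∀ x y : ℕ → Fin d → ℝ, (∀ j ∈ s, x j = y j) → G x = G y) →
      (∀ j, k ≤ j → j ≤ nn → j ∉ s) →
      (∀ᵐ ω ∂μ, vnorm (G (fun t => X t ω)) ≤ B) →
      (∫ ω, vnorm ((prodGamma α (fun t => X t ω) k nn).mulVec
          (G (fun t => X t ω))) ^ 2 ∂μ)
        ≤ (1 - α * a) ^ (nn + 1 - k) *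
            ∫ ω, vnorm (G (fun t => X t ω)) ^ 2 ∂μ := by
  have hXtup : Measurable fun ω => (fun t => X t ω) :=
    measurable_pi_lambda _ fun t => hXmeas t
  have hall : ∀ᵐ ω ∂μ, ∀ j, vnorm (X j ω) ≤ c := ae_all_iff.2 hXbdd
  intro nn
  induction nn with
  | zero =>
      intro k hk s G B hB hGm hGdep hdisj hGb
      simp_rw [show ∀ Xs : ℕ → Fin d → ℝ, prodGamma α Xs k 0 = 1 from
        fun Xs => prodGamma_of_lt α Xs (by omega), Nat.sub_eq_zero_of_le (by omega : 0 + 1 ≤ k)]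
      simp only [Matrix.one_mulVec, pow_zero, one_mul]
      exact le_refl _
  | succ nn ih =>
      intro k hk s G B hB hGm hGdep hdisj hGb
      by_cases hm : k ≤ nn + 1
      · set G' : (ℕ → Fin d → ℝ) → Fin d → ℝ :=
          fun x => (prodGamma α x k nn).mulVec (G x) with hG'def
        have hG'm : Measurable G' :=
          measurable_mulVec_pi (measurable_prodGamma_entry α k nn)
            (fun j => (measurable_pi_apply j).comp hGm)
        have hG'dep : ∀ x y : ℕ → Fin d → ℝ,
            (∀ j ∈ s ∪ Finset.Icc k nn, x j = y j) → G' x = G' y := by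
          intro x y h
          rw [hG'def]
          dsimp only
          rw [hGdep x y (fun j hj => h j (Finset.mem_union_left _ hj)),
            prodGamma_congr α (fun j h1 h2 =>
              h j (Finset.mem_union_right _ (Finset.mem_Icc.2 ⟨h1, h2⟩)))]
        have hG'b : ∀ᵐ ω ∂μ, vnorm (G' (fun t => X t ω)) ≤ B := by
          filter_upwards [hGb, hall] with ω h1 h2
          refine le_trans (vnorm_prodGamma_le hα.le _ k nn (fun j _ _ => ?_) _) h1
          have := h2 j
          have h3 : vnorm (X j ω) ^ 2 ≤ c ^ 2 := pow_le_pow_left₀ (vnorm_nonneg _) (h2 j) 2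
          nlinarith
        -- independence
        have hindY : IndepFun (X (nn + 1)) (fun ω => G' (fun t => X t ω)) μ := by
          classical
          set s' : Finset ℕ := s ∪ Finset.Icc k nn with hs'
          have hnot : (nn + 1) ∉ s' := by
            simp only [hs', Finset.mem_union, Finset.mem_Icc]
            push_neg
            exact ⟨hdisj (nn + 1) hm le_rfl, fun _ => by omega⟩
          have hbase : IndepFun (fun ω => (fun t : ({nn + 1} : Finset ℕ) => X t ω))
              (fun ω => (fun t : (s' : Finset ℕ) => X t ω)) μ :=
            hindep.indepFun_finset {nn + 1} s'
              (Finset.disjoint_singleton_left.2 hnot) hXmeas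
          set ext : ((t : (s' : Finset ℕ)) → Fin d → ℝ) → (ℕ → Fin d → ℝ) :=
            fun y t => if h : t ∈ s' then y ⟨t, h⟩ else 0 with hext
          have hextm : Measurable ext := by
            refine measurable_pi_lambda _ fun t => ?_
            by_cases h : t ∈ s'
            · simp only [hext, dif_pos h]
              exact measurable_pi_apply _
            · simp only [hext, dif_neg h]
              exact measurable_const
          have hYeq : X (nn + 1)
              = (fun y : (t : ({nn + 1} : Finset ℕ)) → Fin d → ℝ =>
                  y ⟨nn + 1, Finset.mem_singleton_self _⟩)
                ∘ (fun ω => (fun t : ({nn + 1} : Finset ℕ) => X t ω)) := rfl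
          have hWeq : (fun ω => G' (fun t => X t ω))
              = (fun y => G' (ext y)) ∘ (fun ω => (fun t : (s' : Finset ℕ) => X t ω)) := by
            funext ω
            exact (hG'dep _ _ (fun j hj => by simp [hext, hj])).symm
          rw [hYeq, hWeq]
          exact hbase.comp (measurable_pi_apply _) (hG'm.comp hextm)
        have hYΦ' : ∀ i j, (∫ ω, X (nn + 1) ω i * X (nn + 1) ω j ∂μ) = Φ i j := by
          intro i j
          rw [← hXΦ i j]
          have hm2 : Measurable fun v : Fin d → ℝ => v i * v j :=
            (measurable_pi_apply i).mul (measurable_pi_apply j)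
          exact ((hident (nn + 1)).comp hm2).integral_eq
        have hstep := step_bound c a α hα hαc hc Φ hmin μ (X (nn + 1))
          (fun ω => G' (fun t => X t ω)) (hXmeas _) (hG'm.comp hXtup)
          (hXbdd _) B hB hG'b hYΦ' hindY
        have hih := ih k hk s G B hB hGm hGdep
          (fun j h1 h2 => hdisj j h1 (by omega)) hGb
        have hrw : (fun ω => vnorm ((prodGamma α (fun t => X t ω) k (nn + 1)).mulVec
              (G (fun t => X t ω))) ^ 2)
            = fun ω => vnorm (((1 : Matrix (Fin d) (Fin d) ℝ)
                - α • vecMulVec (X (nn + 1) ω) (X (nn + 1) ω)).mulVec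
                  (G' (fun t => X t ω))) ^ 2 := by
          funext ω
          rw [prodGamma_succ α _ hm, ← Matrix.mulVec_mulVec]
        rw [hrw]
        have h0 : 0 ≤ 1 - α * a := by linarith
        calc (∫ ω, vnorm (((1 : Matrix (Fin d) (Fin d) ℝ)
                - α • vecMulVec (X (nn + 1) ω) (X (nn + 1) ω)).mulVec
                  (G' (fun t => X t ω))) ^ 2 ∂μ)
            ≤ (1 - α * a) * ∫ ω, vnorm (G' (fun t => X t ω)) ^ 2 ∂μ := hstep
          _ ≤ (1 - α * a) * ((1 - α * a) ^ (nn + 1 - k) *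
                ∫ ω, vnorm (G (fun t => X t ω)) ^ 2 ∂μ) :=
              mul_le_mul_of_nonneg_left hih h0
          _ = (1 - α * a) ^ (nn + 1 + 1 - k) *
                ∫ ω, vnorm (G (fun t => X t ω)) ^ 2 ∂μ := by
              rw [← mul_assoc, ← pow_succ']
              congr 2
              omega
      · simp_rw [show ∀ Xs : ℕ → Fin d → ℝ, prodGamma α Xs k (nn + 1) = 1 from
          fun Xs => prodGamma_of_lt α Xs (by omega),
          Nat.sub_eq_zero_of_le (by omega : nn + 1 + 1 ≤ k)]
        simp only [Matrix.one_mulVec, pow_zero, one_mul]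
        exact le_refl _

lemma part1 {d : ℕ} (α : ℝ) (Xs : ℕ → Fin d → ℝ) (x' : Fin d → ℝ) (n i : ℕ)
    (hi : 1 ≤ i) (hin : i ≤ n) :
    prodGamma α Xs 1 n - prodGamma α (fun j => if j = i then x' else Xs j) 1 n
      = α • (prodGamma α Xs (i + 1) n
          * (vecMulVec x' x' - vecMulVec (Xs i) (Xs i)) * prodGamma α Xs 1 (i - 1)) := by
  obtain ⟨i', rfl⟩ : ∃ i', i = i' + 1 := ⟨i - 1, by omega⟩
  set Ys := fun j => if j = i' + 1 then x' else Xs j with hYs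
  have hsX : prodGamma α Xs 1 n = prodGamma α Xs (i' + 2) n * prodGamma α Xs 1 (i' + 1) :=
    prodGamma_split α Xs (by omega) n hin
  have hsY : prodGamma α Ys 1 n = prodGamma α Ys (i' + 2) n * prodGamma α Ys 1 (i' + 1) :=
    prodGamma_split α Ys (by omega) n hin
  have hAY : prodGamma α Ys (i' + 2) n = prodGamma α Xs (i' + 2) n :=
    prodGamma_congr α fun j h1 _ => by simp only [hYs]; rw [if_neg (by omega)]
  have hCY : prodGamma α Ys 1 i' = prodGamma α Xs 1 i' :=
    prodGamma_congr α fun j _ h2 => by simp only [hYs]; rw [if_neg (by omega)]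
  have hX1 : prodGamma α Xs 1 (i' + 1)
      = ((1 : Matrix (Fin d) (Fin d) ℝ)
          - α • vecMulVec (Xs (i' + 1)) (Xs (i' + 1))) * prodGamma α Xs 1 i' :=
    prodGamma_succ α Xs (by omega)
  have hY1 : prodGamma α Ys 1 (i' + 1)
      = ((1 : Matrix (Fin d) (Fin d) ℝ) - α • vecMulVec x' x') * prodGamma α Ys 1 i' := by
    rw [prodGamma_succ α Ys (by omega)]
    congr 2 <;> simp [hYs]
  have hidx : i' + 1 - 1 = i' := by omega
  rw [hidx, hsX, hsY, hAY, hX1, hY1, hCY]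
  set A := prodGamma α Xs (i' + 2) n
  set C := prodGamma α Xs 1 i'
  set P := vecMulVec (Xs (i' + 1)) (Xs (i' + 1))
  set Q := vecMulVec x' x'
  have hM : ((1 : Matrix (Fin d) (Fin d) ℝ) - α • P) - (1 - α • Q) = α • (Q - P) := by
    rw [smul_sub]; abel
  calc A * ((1 - α • P) * C) - A * ((1 - α • Q) * C)
      = A * ((((1 : Matrix (Fin d) (Fin d) ℝ) - α • P) - (1 - α • Q)) * C) := by
        rw [← Matrix.mul_sub, ← Matrix.sub_mul]
    _ = A * ((α • (Q - P)) * C) := by rw [hM]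
    _ = α • (A * (Q - P) * C) := by
        rw [Matrix.smul_mul, Matrix.mul_smul, Matrix.mul_assoc]

set_option maxHeartbeats 1000000 in
/-- For i.i.d. bounded features `X_1,…,X_n` and an independent copy
`X_i' := X_{n+1}` substituted at index `i`, writing `Γ'_{1:n}` for the product with the
substituted sequence, one has
`Γ_{1:n} − Γ'_{1:n} = αΓ_{i+1:n}(X_i'X_i'ᵀ − X_iX_iᵀ)Γ_{1:i−1}` and
`E[‖(Γ_{1:n} − Γ'_{1:n})v‖²]^{1/2} ≤ 2αc²(1 − αa/2)^{n−1}‖v‖`. -/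
theorem stmt_16 {d : ℕ} (c a α : ℝ) (hc : 0 < c) (ha : 0 < a)
    (hα : 0 < α) (hα' : α ≤ 1 / c ^ 2)
    (Φ : Matrix (Fin d) (Fin d) ℝ) (hΦpd : Φ.PosDef)
    (hmin : ∀ u : Fin d → ℝ, a * vnorm u ^ 2 ≤ u ⬝ᵥ Φ.mulVec u)
    {Ω : Type*} [MeasurableSpace Ω] (μ : Measure Ω) [IsProbabilityMeasure μ]
    (X : ℕ → Ω → Fin d → ℝ) (hXmeas : ∀ k, Measurable (X k))
    (hindep : iIndepFun X μ)
    (hident : ∀ k, IdentDistrib (X k) (X 1) μ μ)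
    (hXbdd : ∀ k, ∀ᵐ ω ∂μ, vnorm (X k ω) ≤ c)
    (hXΦ : ∀ i j, ∫ ω, X 1 ω i * X 1 ω j ∂μ = Φ i j)
    (n i : ℕ) (hi : 1 ≤ i) (hin : i ≤ n) :
    (∀ ω : Ω,
      prodGamma α (fun j => X j ω) 1 n
          - prodGamma α (fun j => if j = i then X (n + 1) ω else X j ω) 1 n
        = α • (prodGamma α (fun j => X j ω) (i + 1) n
            * (vecMulVec (X (n + 1) ω) (X (n + 1) ω) - vecMulVec (X i ω) (X i ω))
            * prodGamma α (fun j => X j ω) 1 (i - 1)))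
      ∧ ∀ v : Fin d → ℝ,
        Real.sqrt (∫ ω, vnorm
            ((prodGamma α (fun j => X j ω) 1 n
              - prodGamma α (fun j => if j = i then X (n + 1) ω else X j ω) 1 n).mulVec
                v) ^ 2 ∂μ)
          ≤ 2 * α * c ^ 2 * (1 - α * a / 2) ^ (n - 1) * vnorm v := by
  have hpart1 : ∀ ω : Ω,
      prodGamma α (fun j => X j ω) 1 n
          - prodGamma α (fun j => if j = i then X (n + 1) ω else X j ω) 1 n
        = α • (prodGamma α (fun j => X j ω) (i + 1) n
            * (vecMulVec (X (n + 1) ω) (X (n + 1) ω) - vecMulVec (X i ω) (X i ω))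
            * prodGamma α (fun j => X j ω) 1 (i - 1)) :=
    fun ω => part1 α (fun j => X j ω) (X (n + 1) ω) n i hi hin
  refine ⟨hpart1, ?_⟩
  by_cases hd : d = 0
  · subst hd
    intro v
    have hv : ∀ u : Fin 0 → ℝ, vnorm u = 0 := fun u => by
      simp [vnorm]
    simp only [hv]
    simp [hv]
  have hdpos : 0 < d := Nat.pos_of_ne_zero hd
  set i0 : Fin d := ⟨0, hdpos⟩
  have hc2 : (0:ℝ) < c ^ 2 := by positivity
  have hαc : α * c ^ 2 ≤ 1 := (le_div_iff₀ hc2).mp hα'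
  have hsingle_norm : vnorm (Pi.single i0 1 : Fin d → ℝ) ^ 2 = 1 := by
    rw [vnorm_sq, Finset.sum_eq_single i0]
    · simp
    · intro b _ hb
      simp [Pi.single_apply, hb]
    · intro h; exact absurd (Finset.mem_univ _) h
  have hquad : (Pi.single i0 1 : Fin d → ℝ) ⬝ᵥ Φ.mulVec (Pi.single i0 1) = Φ i0 i0 := by
    rw [Matrix.mulVec_single, single_dotProduct]
    simp
  have hX1c : ∀ j, Measurable fun ω => X 1 ω j :=
    fun j => (measurable_pi_apply j).comp (hXmeas 1)
  have hΦ00 : Φ i0 i0 ≤ c ^ 2 := by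
    rw [← hXΦ i0 i0]
    have hint1 : Integrable (fun ω => X 1 ω i0 * X 1 ω i0) μ := by
      refine integrable_of_bound μ ((hX1c i0).mul (hX1c i0)).aestronglyMeasurable (c * c) ?_
      filter_upwards [hXbdd 1] with ω h
      rw [abs_mul]
      exact mul_le_mul (le_trans (abs_le_vnorm _ _) h) (le_trans (abs_le_vnorm _ _) h)
        (abs_nonneg _) hc.le
    have hmono : (∫ ω, X 1 ω i0 * X 1 ω i0 ∂μ) ≤ ∫ _ω : Ω, c ^ 2 ∂μ := by
      refine integral_mono_ae hint1 (integrable_const _) ?_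
      filter_upwards [hXbdd 1] with ω h
      have h1 := abs_le_vnorm (X 1 ω) i0
      nlinarith [abs_nonneg (X 1 ω i0), sq_abs (X 1 ω i0)]
    simpa using hmono
  have haC : a ≤ c ^ 2 := by
    have h := hmin (Pi.single i0 1)
    rw [hsingle_norm, hquad] at h
    linarith
  have haa : α * a ≤ 1 := le_trans (by nlinarith : α * a ≤ α * c ^ 2) hαc
  have h0 : 0 ≤ 1 - α * a := by linarith
  have hall : ∀ᵐ ω ∂μ, ∀ j, vnorm (X j ω) ≤ c := ae_all_iff.2 hXbdd
  have hαx : ∀ᵐ ω ∂μ, ∀ j, α * vnorm (X j ω) ^ 2 ≤ 1 := by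
    filter_upwards [hall] with ω h j
    have h3 : vnorm (X j ω) ^ 2 ≤ c ^ 2 := pow_le_pow_left₀ (vnorm_nonneg _) (h j) 2
    nlinarith
  intro v
  classical
  -- inner vector
  set Cf : Ω → Fin d → ℝ :=
    fun ω => (prodGamma α (fun t => X t ω) 1 (i - 1)).mulVec v with hCf
  have hXtup : Measurable fun ω => (fun t => X t ω) :=
    measurable_pi_lambda _ fun t => hXmeas t
  have hCcoord : ∀ j : Fin d,
      Measurable fun x : ℕ → Fin d → ℝ => (prodGamma α x 1 (i - 1)).mulVec v j :=
    fun j => (measurable_pi_apply j).comp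
      (measurable_mulVec_pi (w := fun _ => v) (measurable_prodGamma_entry α 1 (i - 1))
        (fun _ => measurable_const))
  have hCm : Measurable Cf :=
    (measurable_mulVec_pi (w := fun _ => v) (measurable_prodGamma_entry α 1 (i - 1))
      (fun _ => measurable_const)).comp hXtup
  have hCb : ∀ᵐ ω ∂μ, vnorm (Cf ω) ≤ vnorm v := by
    filter_upwards [hαx] with ω h
    exact vnorm_prodGamma_le hα.le _ 1 (i - 1) (fun j _ _ => h j) v
  -- G0
  set G0 : (ℕ → Fin d → ℝ) → Fin d → ℝ := fun x =>
    (vecMulVec (x (n + 1)) (x (n + 1)) - vecMulVec (x i) (x i)).mulVec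
      ((prodGamma α x 1 (i - 1)).mulVec v) with hG0
  have hDentry : ∀ p q : Fin d, Measurable fun x : ℕ → Fin d → ℝ =>
      (vecMulVec (x (n + 1)) (x (n + 1)) - vecMulVec (x i) (x i)) p q := by
    intro p q
    simp only [Matrix.sub_apply, Matrix.vecMulVec_apply]
    fun_prop
  have hG0m : Measurable G0 := measurable_mulVec_pi hDentry hCcoord
  set s0 : Finset ℕ := insert i (insert (n + 1) (Finset.Icc 1 (i - 1))) with hs0
  have hG0dep : ∀ x y : ℕ → Fin d → ℝ, (∀ j ∈ s0, x j = y j) → G0 x = G0 y := by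
    intro x y h
    have hxi : x i = y i := h i (by simp [hs0])
    have hxn : x (n + 1) = y (n + 1) := h (n + 1) (by simp [hs0])
    have hpg : prodGamma α x 1 (i - 1) = prodGamma α y 1 (i - 1) :=
      prodGamma_congr α fun j h1 h2 =>
        h j (by simp [hs0, Finset.mem_Icc]; omega)
    rw [hG0]
    dsimp only
    rw [hxi, hxn, hpg]
  have hG0b : ∀ᵐ ω ∂μ, vnorm (G0 (fun t => X t ω)) ≤ 2 * c ^ 2 * vnorm v := by
    filter_upwards [hall, hαx] with ω h hax
    have hCle : vnorm ((prodGamma α (fun t => X t ω) 1 (i - 1)).mulVec v) ≤ vnorm v :=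
      vnorm_prodGamma_le hα.le _ 1 (i - 1) (fun j _ _ => hax j) v
    refine le_trans (vnorm_vvD_le _ _ _) ?_
    have h1 : vnorm (X (n + 1) ω) ^ 2 ≤ c ^ 2 :=
      pow_le_pow_left₀ (vnorm_nonneg _) (h (n + 1)) 2
    have h2 : vnorm (X i ω) ^ 2 ≤ c ^ 2 :=
      pow_le_pow_left₀ (vnorm_nonneg _) (h i) 2
    have h3 := vnorm_nonneg ((prodGamma α (fun t => X t ω) 1 (i - 1)).mulVec v)
    have h4 := vnorm_nonneg v
    nlinarith
  have houter := chain_bound c a α hα hαc hc.le haa Φ hmin μ X hXmeas hindep hident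
    hXbdd hXΦ n (i + 1) (by omega) s0 G0 (2 * c ^ 2 * vnorm v)
    (mul_nonneg (by positivity) (vnorm_nonneg v)) hG0m hG0dep
    (fun j h1 h2 => by simp [hs0, Finset.mem_Icc]; omega) hG0b
  have hinner := chain_bound c a α hα hαc hc.le haa Φ hmin μ X hXmeas hindep hident
    hXbdd hXΦ (i - 1) 1 le_rfl ∅ (fun _ => v) (vnorm v) (vnorm_nonneg v)
    measurable_const (fun x y _ => rfl) (fun j _ _ => Finset.notMem_empty j)
    (Filter.Eventually.of_forall fun ω => le_rfl)
  rw [show (i - 1) + 1 - 1 = i - 1 by omega] at hinner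
  rw [show (∫ (_ : Ω), vnorm v ^ 2 ∂μ) = vnorm v ^ 2 by simp] at hinner
  -- middle bound
  have hCint : Integrable (fun ω => vnorm (Cf ω) ^ 2) μ := by
    refine integrable_of_bound μ
      ((measurable_vnorm.comp hCm).pow_const 2).aestronglyMeasurable (vnorm v ^ 2) ?_
    filter_upwards [hCb] with ω h
    rw [abs_of_nonneg (sq_nonneg _)]
    exact pow_le_pow_left₀ (vnorm_nonneg _) h 2
  have hmid : (∫ ω, vnorm (G0 (fun t => X t ω)) ^ 2 ∂μ)
      ≤ 4 * c ^ 4 * ∫ ω, vnorm (Cf ω) ^ 2 ∂μ := by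
    rw [← integral_const_mul]
    refine integral_mono_of_nonneg
      (Filter.Eventually.of_forall fun ω => sq_nonneg _) (hCint.const_mul _) ?_
    filter_upwards [hall] with ω h
    have hDle : vnorm (G0 (fun t => X t ω)) ≤ 2 * c ^ 2 * vnorm (Cf ω) := by
      refine le_trans (vnorm_vvD_le _ _ _) ?_
      have h1 : vnorm (X (n + 1) ω) ^ 2 ≤ c ^ 2 :=
        pow_le_pow_left₀ (vnorm_nonneg _) (h (n + 1)) 2
      have h2 : vnorm (X i ω) ^ 2 ≤ c ^ 2 :=
        pow_le_pow_left₀ (vnorm_nonneg _) (h i) 2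
      have h3 := vnorm_nonneg (Cf ω)
      nlinarith
    have h5 : vnorm (G0 (fun t => X t ω)) ^ 2 ≤ (2 * c ^ 2 * vnorm (Cf ω)) ^ 2 :=
      pow_le_pow_left₀ (vnorm_nonneg _) hDle 2
    calc vnorm (G0 (fun t => X t ω)) ^ 2 ≤ (2 * c ^ 2 * vnorm (Cf ω)) ^ 2 := h5
      _ = 4 * c ^ 4 * vnorm (Cf ω) ^ 2 := by ring
  -- rewrite target integrand
  have hptw : (fun ω => vnorm
        ((prodGamma α (fun j => X j ω) 1 n
          - prodGamma α (fun j => if j = i then X (n + 1) ω else X j ω) 1 n).mulVec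
            v) ^ 2)
      = fun ω => α ^ 2 * vnorm ((prodGamma α (fun t => X t ω) (i + 1) n).mulVec
          (G0 (fun t => X t ω))) ^ 2 := by
    funext ω
    rw [hpart1 ω, Matrix.smul_mulVec, vnorm_smul, abs_of_pos hα, mul_pow]
    congr 3
    rw [hG0]
    dsimp only
    rw [Matrix.mulVec_mulVec, Matrix.mulVec_mulVec]
  rw [hptw, integral_const_mul]
  -- combine all bounds
  have hI1 : (∫ ω, vnorm ((prodGamma α (fun t => X t ω) (i + 1) n).mulVec
      (G0 (fun t => X t ω))) ^ 2 ∂μ)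
      ≤ (1 - α * a) ^ (n - i) * (4 * c ^ 4 * ((1 - α * a) ^ (i - 1) * vnorm v ^ 2)) := by
    rw [show n + 1 - (i + 1) = n - i by omega] at houter
    refine le_trans houter ?_
    have hpow : (0:ℝ) ≤ (1 - α * a) ^ (n - i) := pow_nonneg h0 _
    refine mul_le_mul_of_nonneg_left ?_ hpow
    refine le_trans hmid ?_
    have : (0:ℝ) ≤ 4 * c ^ 4 := by positivity
    exact mul_le_mul_of_nonneg_left hinner this
  have hI2 : α ^ 2 * (∫ ω, vnorm ((prodGamma α (fun t => X t ω) (i + 1) n).mulVec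
      (G0 (fun t => X t ω))) ^ 2 ∂μ)
      ≤ (2 * α * c ^ 2 * vnorm v) ^ 2 * (1 - α * a) ^ (n - 1) := by
    have h6 : (1 - α * a) ^ (n - i) * (1 - α * a) ^ (i - 1) = (1 - α * a) ^ (n - 1) := by
      rw [← pow_add]
      congr 1
      omega
    have h7 := mul_le_mul_of_nonneg_left hI1 (sq_nonneg α)
    refine le_trans h7 (le_of_eq ?_)
    calc α ^ 2 * ((1 - α * a) ^ (n - i) * (4 * c ^ 4 * ((1 - α * a) ^ (i - 1) * vnorm v ^ 2)))
        = (2 * α * c ^ 2 * vnorm v) ^ 2 * ((1 - α * a) ^ (n - i) * (1 - α * a) ^ (i - 1)) := by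
          ring
      _ = (2 * α * c ^ 2 * vnorm v) ^ 2 * (1 - α * a) ^ (n - 1) := by rw [h6]
  refine le_trans (Real.sqrt_le_sqrt hI2) ?_
  rw [Real.sqrt_mul (sq_nonneg _), Real.sqrt_sq (mul_nonneg (by positivity : (0:ℝ) ≤ 2 * α * c ^ 2) (vnorm_nonneg v))]
  have h3 : Real.sqrt ((1 - α * a) ^ (n - 1)) ≤ (1 - α * a / 2) ^ (n - 1) := by
    have hbase : 1 - α * a ≤ (1 - α * a / 2) ^ 2 := by nlinarith [sq_nonneg (α * a)]
    have h4 : (1 - α * a) ^ (n - 1) ≤ ((1 - α * a / 2) ^ (n - 1)) ^ 2 := by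
      rw [← pow_mul, mul_comm (n-1) 2, pow_mul]
      exact pow_le_pow_left₀ h0 hbase (n - 1)
    refine le_trans (Real.sqrt_le_sqrt h4) ?_
    rw [Real.sqrt_sq (pow_nonneg (by linarith) _)]
  calc 2 * α * c ^ 2 * vnorm v * Real.sqrt ((1 - α * a) ^ (n - 1))
      ≤ 2 * α * c ^ 2 * vnorm v * (1 - α * a / 2) ^ (n - 1) :=
        mul_le_mul_of_nonneg_left h3
          (mul_nonneg (by positivity : (0:ℝ) ≤ 2 * α * c ^ 2) (vnorm_nonneg v))
    _ = 2 * α * c ^ 2 * (1 - α * a / 2) ^ (n - 1) * vnorm v := by ring
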